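/- Let p ∈ (1,2) and a > 0. There exists a unique pair of continuously differentiable functions (f,g) : [0,∞) → ℝ² satisfying the system f'(r) = -|g(r)|^{(2-p)/(p-1)} g(r) and g'(r) = -|g(r)| + f(r) for all r ∈ (0,∞), with initial conditions f(0) = a and g(0) = 0; in particular the solution is global (it does not blow up in finite time). Moreover g = -|f'|^{p-2} f', so that f ∈ C¹([0,∞)) with |f'|^{p-2} f' ∈ C¹([0,∞)) is the unique solution of the ordinary differential equation (|f'|^{p-2} f')' + f - |f'|^{p-1} = 0 on (0,∞) with f(0) = a and f'(0) = 0. -/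

import Mathlib

open Set Filter Topology

/-- The first-order system obtained from the second-order ODE via `g = -|f'|^{p-2} f'`:
`f' = -|g|^{(2-p)/(p-1)} g`, `g' = -|g| + f` on `[0,∞)`, with `f(0)=a`, `g(0)=0`,
the pair `(f,g)` being continuously differentiable on `[0,∞)` (in particular global). -/
def SysSol (p a : ℝ) (f g : ℝ → ℝ) : Prop :=
  ContDiffOn ℝ 1 f (Set.Ici 0) ∧ ContDiffOn ℝ 1 g (Set.Ici 0) ∧
  (∀ r ∈ Set.Ici (0:ℝ), HasDerivWithinAt f (-(|g r| ^ ((2-p)/(p-1)) * g r)) (Set.Ici 0) r) ∧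
  (∀ r ∈ Set.Ici (0:ℝ), HasDerivWithinAt g (-|g r| + f r) (Set.Ici 0) r) ∧
  f 0 = a ∧ g 0 = 0

/-- `f` solves `(|f'|^{p-2} f')' + f - |f'|^{p-1} = 0` on `(0,∞)` with `f(0)=a`, `f'(0)=0`;
`fd` is the derivative of `f` and `gd` the derivative of `|f'|^{p-2} f'`, both continuous
on `[0,∞)`, so that `f ∈ C¹([0,∞))` and `|f'|^{p-2} f' ∈ C¹([0,∞))`. -/
def IsSol (p a : ℝ) (f fd gd : ℝ → ℝ) : Prop :=
  (∀ r ∈ Set.Ici (0:ℝ), HasDerivWithinAt f (fd r) (Set.Ici 0) r) ∧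
  ContinuousOn fd (Set.Ici 0) ∧
  (∀ r ∈ Set.Ici (0:ℝ), HasDerivWithinAt (fun s => |fd s| ^ (p-2) * fd s) (gd r) (Set.Ici 0) r) ∧
  ContinuousOn gd (Set.Ici 0) ∧
  (∀ r ∈ Set.Ioi (0:ℝ), gd r + f r - |fd r| ^ (p-1) = 0) ∧
  f 0 = a ∧ fd 0 = 0


section Aux
open scoped NNReal

lemma hasDerivAt_psi {e : ℝ} (he : 0 < e) (y : ℝ) :
    HasDerivAt (fun y : ℝ => |y| ^ e * y) ((e + 1) * |y| ^ e) y := by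
  rcases lt_trichotomy y 0 with hy | rfl | hy
  · have hev : (fun z : ℝ => (-z) ^ e * z) =ᶠ[𝓝 y] fun z => |z| ^ e * z := by
      filter_upwards [Iio_mem_nhds hy] with z hz
      rw [abs_of_neg hz]
    have hny : (0:ℝ) < -y := by linarith
    have h1 : HasDerivAt (fun z : ℝ => (-z) ^ e) (e * (-y) ^ (e - 1) * (-1)) y := by
      have := (Real.hasDerivAt_rpow_const (p := e) (x := -y) (Or.inl (by linarith)))
      exact this.comp y (hasDerivAt_neg y)
    have h2 := h1.mul (hasDerivAt_id y)
    refine (h2.congr_of_eventuallyEq hev.symm).congr_deriv ?_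
    rw [abs_of_neg hy, id_eq]
    have key : y * (-y) ^ (e - 1) = -((-y) ^ e) := by
      rw [show e = (e-1) + 1 by ring, Real.rpow_add hny, Real.rpow_one]; ring
    linear_combination (-e) * key
  · have h0 : |(0:ℝ)| ^ e = 0 := by rw [abs_zero, Real.zero_rpow he.ne']
    rw [h0, mul_zero]
    rw [hasDerivAt_iff_tendsto_slope]
    have hev : (fun z : ℝ => |z| ^ e) =ᶠ[𝓝[≠] (0:ℝ)] slope (fun y : ℝ => |y| ^ e * y) 0 := by
      filter_upwards [self_mem_nhdsWithin] with z hz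
      simp only [slope_def_field, h0, mul_zero, sub_zero]
      rw [mul_div_assoc, div_self (by simpa using hz), mul_one]
    refine Tendsto.congr' hev ?_
    have hc : ContinuousAt (fun z : ℝ => |z| ^ e) 0 :=
      (Real.continuousAt_rpow_const _ _ (Or.inr he.le)).comp continuous_abs.continuousAt
    have := (hc.continuousWithinAt (s := {(0:ℝ)}ᶜ)).tendsto
    simpa [h0, Real.zero_rpow he.ne'] using this
  · have hev : (fun z : ℝ => z ^ e * z) =ᶠ[𝓝 y] fun z => |z| ^ e * z := by
      filter_upwards [Ioi_mem_nhds hy] with z hz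
      rw [abs_of_pos hz]
    have h1 : HasDerivAt (fun z : ℝ => z ^ e) (e * y ^ (e - 1)) y :=
      Real.hasDerivAt_rpow_const (Or.inl hy.ne')
    have h2 := h1.mul (hasDerivAt_id y)
    refine (h2.congr_of_eventuallyEq hev.symm).congr_deriv ?_
    rw [abs_of_pos hy, id_eq]
    have key : y ^ (e - 1) * y = y ^ e := by
      nth_rewrite 2 [show e = (e-1) + 1 from by ring]
      rw [Real.rpow_add hy, Real.rpow_one]
    linear_combination e * key


noncomputable def psi (q y : ℝ) : ℝ := |y| ^ q * y

noncomputable def clampF (M y : ℝ) : ℝ := max (-M) (min y M)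

noncomputable def psiC (q M y : ℝ) : ℝ := psi q (clampF M y)

noncomputable def Vfield (q : ℝ) (x : ℝ × ℝ) : ℝ × ℝ := (-(psi q x.2), -|x.2| + x.1)

noncomputable def VM (q M : ℝ) (x : ℝ × ℝ) : ℝ × ℝ := (-(psiC q M x.2), -|x.2| + x.1)

lemma psi_zero (q : ℝ) : psi q 0 = 0 := by simp [psi]

lemma abs_psi {q : ℝ} (hq : 0 < q) (y : ℝ) : |psi q y| = |y| ^ (q + 1) := by
  rcases eq_or_ne y 0 with rfl | hy
  · simp [psi, Real.zero_rpow (by positivity : q + 1 ≠ 0)]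
  · rw [psi, abs_mul, abs_of_nonneg (Real.rpow_nonneg (abs_nonneg y) q),
      Real.rpow_add_one (abs_ne_zero.mpr hy)]

lemma clampF_eq {M y : ℝ} (h : |y| ≤ M) : clampF M y = y := by
  rw [abs_le] at h
  rw [clampF, min_eq_left h.2, max_eq_right h.1]

lemma abs_clampF_le {M : ℝ} (hM : 0 ≤ M) (y : ℝ) : |clampF M y| ≤ M := by
  rw [abs_le, clampF]
  constructor
  · exact le_max_left _ _
  · exact max_le (by linarith) (min_le_right _ _)

lemma lipschitzWith_clampF (M : ℝ) : LipschitzWith 1 (clampF M) :=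
  (LipschitzWith.id.min_const M).const_max (-M)


lemma lipschitzOnWith_psi {q M : ℝ} (hq : 0 < q) (hM : 0 ≤ M) :
    LipschitzOnWith ((q + 1) * M ^ q).toNNReal (psi q) (Icc (-M) M) := by
  apply (convex_Icc (-M) M).lipschitzOnWith_of_nnnorm_hasDerivWithin_le
    (f' := fun y => (q + 1) * |y| ^ q)
  · exact fun x _ => (hasDerivAt_psi hq x).hasDerivWithinAt
  · intro x hx
    rw [← NNReal.coe_le_coe, coe_nnnorm,
      Real.coe_toNNReal _ (by positivity)]
    rw [Real.norm_eq_abs, abs_mul, abs_of_nonneg (by positivity : (0:ℝ) ≤ q + 1),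
      abs_of_nonneg (Real.rpow_nonneg (abs_nonneg x) q)]
    have : |x| ≤ M := abs_le.mpr hx
    exact mul_le_mul_of_nonneg_left (Real.rpow_le_rpow (abs_nonneg x) this hq.le) (by positivity)

lemma lipschitzWith_psiC {q M : ℝ} (hq : 0 < q) (hM : 0 ≤ M) :
    ∃ K : ℝ≥0, LipschitzWith K (psiC q M) := by
  have h1 := (lipschitzOnWith_psi hq hM).comp
    ((lipschitzWith_clampF M).lipschitzOnWith (s := univ))
    (fun y _ => abs_le.mp (abs_clampF_le hM y))
  exact ⟨_, lipschitzOnWith_univ.mp h1⟩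

lemma lipschitzWith_VM {q M : ℝ} (hq : 0 < q) (hM : 0 ≤ M) :
    ∃ K : ℝ≥0, LipschitzWith K (VM q M) := by
  obtain ⟨K, hK⟩ := lipschitzWith_psiC hq hM
  have h1 : LipschitzWith (K * 1) (fun x : ℝ × ℝ => -(psiC q M x.2)) :=
    (hK.comp LipschitzWith.prod_snd).neg
  have h2 : LipschitzWith (1 * 1 + 1) (fun x : ℝ × ℝ => -|x.2| + x.1) := by
    have := ((lipschitzWith_one_norm (E := ℝ)).comp
      (LipschitzWith.prod_snd (α := ℝ) (β := ℝ))).neg.add LipschitzWith.prod_fst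
    simpa [Function.comp] using this
  exact ⟨_, h1.prodMk h2⟩


lemma norm_VM_le {q M : ℝ} (hq : 0 < q) (hM : 0 ≤ M) (x : ℝ × ℝ) :
    ‖VM q M x‖ ≤ M ^ (q + 1) + 2 * ‖x‖ := by
  have h1 : |psiC q M x.2| ≤ M ^ (q + 1) := by
    rw [psiC, abs_psi hq]
    exact Real.rpow_le_rpow (abs_nonneg _) (abs_clampF_le hM x.2) (by positivity)
  have h2 : |(-|x.2| + x.1)| ≤ 2 * ‖x‖ := by
    have hx1 : |x.1| ≤ ‖x‖ := by
      simpa [Real.norm_eq_abs] using norm_fst_le x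
    have hx2 : |x.2| ≤ ‖x‖ := by
      simpa [Real.norm_eq_abs] using norm_snd_le x
    calc |(-|x.2| + x.1)| ≤ |(-|x.2|)| + |x.1| := abs_add_le _ _
      _ ≤ ‖x‖ + ‖x‖ := by rw [abs_neg, abs_abs]; exact add_le_add hx2 hx1
      _ = 2 * ‖x‖ := by ring
  rw [VM, Prod.norm_def]
  apply max_le
  · simp only [Real.norm_eq_abs, abs_neg]
    calc |psiC q M x.2| ≤ M ^ (q+1) := h1
      _ ≤ _ := le_add_of_nonneg_right (by positivity)
  · simp only [Real.norm_eq_abs]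
    calc |(-|x.2| + x.1)| ≤ 2 * ‖x‖ := h2
      _ ≤ _ := le_add_of_nonneg_left (by positivity)

/-- One Picard–Lindelöf step of uniform length 1/4 for the truncated field. -/
lemma step_VM {q M : ℝ} (hq : 0 < q) (hM : 0 ≤ M) (t₀ : ℝ) (x₀ : ℝ × ℝ) :
    ∃ x : ℝ → ℝ × ℝ, x t₀ = x₀ ∧
      ∀ t ∈ Icc t₀ (t₀ + 4⁻¹), HasDerivWithinAt x (VM q M (x t)) (Icc t₀ (t₀ + 4⁻¹)) t := by
  obtain ⟨K, hK⟩ := lipschitzWith_VM hq hM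
  set B : ℝ := M ^ (q + 1) + 2 * ‖x₀‖ with hB
  have hB0 : 0 ≤ B := by positivity
  have ht0 : t₀ ∈ Icc t₀ (t₀ + 4⁻¹) := ⟨le_refl _, by norm_num⟩
  have hpl : IsPicardLindelof (fun _ x => VM q M x) (⟨t₀, ht0⟩ : Icc t₀ (t₀ + 4⁻¹)) x₀
      ⟨B + 1, by positivity⟩ 0 ⟨3*B + 2, by positivity⟩ K := by
    constructor
    · exact fun t _ => hK.lipschitzOnWith
    · exact fun x _ => continuousOn_const
    · intro t _ x hx
      show ‖VM q M x‖ ≤ 3*B + 2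
      have : ‖x‖ ≤ ‖x₀‖ + (B + 1) := by
        have := mem_closedBall_iff_norm.mp hx
        change ‖x - x₀‖ ≤ B + 1 at this
        have h := norm_le_norm_add_norm_sub' x x₀  -- ‖x‖ ≤ ‖x₀‖ + ‖x - x₀‖ ?
        calc ‖x‖ ≤ ‖x₀‖ + ‖x - x₀‖ := by
              have := norm_sub_norm_le x x₀; linarith
          _ ≤ ‖x₀‖ + (B + 1) := by linarith
      calc ‖VM q M x‖ ≤ M ^ (q+1) + 2 * ‖x‖ := norm_VM_le hq hM x
        _ ≤ M ^ (q+1) + 2 * (‖x₀‖ + (B+1)) := by linarith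
        _ ≤ 3*B + 2 := by
            have : M ^ (q+1) + 2*‖x₀‖ = B := hB.symm
            nlinarith [norm_nonneg x₀, Real.rpow_nonneg hM (q+1)]
    · show (3*B + 2) * max (t₀ + 4⁻¹ - t₀) (t₀ - t₀) ≤ (B + 1) - ((0:ℝ≥0):ℝ)
      have : max (t₀ + 4⁻¹ - t₀) (t₀ - t₀) = 4⁻¹ := by
        rw [max_eq_left] <;> norm_num
      rw [this, NNReal.coe_zero]
      linarith
  obtain ⟨x, hx0, hx⟩ := hpl.exists_eq_forall_mem_Icc_hasDerivWithinAt₀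
  exact ⟨x, hx0, hx⟩


variable {E : Type*} [NormedAddCommGroup E] [NormedSpace ℝ E]

/-- Glue two solutions of the same autonomous ODE at a common point. -/
lemma glue_sol {A B C : ℝ} (hAB : A ≤ B) (hBC : B ≤ C) {x y : ℝ → E} {F : E → E}
    (hx : ∀ t ∈ Icc A B, HasDerivWithinAt x (F (x t)) (Icc A B) t)
    (hy : ∀ t ∈ Icc B C, HasDerivWithinAt y (F (y t)) (Icc B C) t)
    (hxy : x B = y B) :
    ∃ z : ℝ → E, EqOn z x (Icc A B) ∧
      ∀ t ∈ Icc A C, HasDerivWithinAt z (F (z t)) (Icc A C) t := by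
  classical
  set z : ℝ → E := fun t => if t ≤ B then x t else y t with hz
  have hzx : EqOn z x (Icc A B) := fun t ht => if_pos ht.2
  have hzy : EqOn z y (Icc B C) := by
    intro t ht
    rcases eq_or_lt_of_le ht.1 with h | h
    · simp only [hz, ← h, le_refl, if_pos, hxy]
    · exact if_neg (not_le.mpr h)
  refine ⟨z, hzx, fun t ht => ?_⟩
  rcases lt_trichotomy t B with h | h | h
  · have htAB : t ∈ Icc A B := ⟨ht.1, h.le⟩
    have h1 : HasDerivWithinAt x (F (x t)) (Icc A C ∩ Iio B) t :=
      (hx t htAB).mono (fun s hs => ⟨hs.1.1, hs.2.le⟩)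
    have h2 : HasDerivWithinAt z (F (z t)) (Icc A C ∩ Iio B) t := by
      refine (h1.congr (fun s hs => hzx ⟨hs.1.1, hs.2.le⟩) (hzx htAB)).congr_deriv ?_
      rw [hzx htAB]
    exact (hasDerivWithinAt_inter (Iio_mem_nhds h)).mp h2
  · subst h
    have h1 : HasDerivWithinAt z (F (z t)) (Icc A t) t := by
      refine ((hx t ⟨ht.1, le_refl t⟩).congr (fun s hs => hzx hs) (hzx ⟨ht.1, le_refl t⟩)).congr_deriv ?_
      rw [hzx ⟨ht.1, le_refl t⟩]
    have h2 : HasDerivWithinAt z (F (z t)) (Icc t C) t := by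
      refine ((hy t ⟨le_refl t, ht.2⟩).congr (fun s hs => hzy hs) (hzy ⟨le_refl t, ht.2⟩)).congr_deriv ?_
      rw [hzy ⟨le_refl t, ht.2⟩]
    have := h1.union h2
    rwa [Icc_union_Icc_eq_Icc ht.1 ht.2] at this
  · have htBC : t ∈ Icc B C := ⟨h.le, ht.2⟩
    have h1 : HasDerivWithinAt y (F (y t)) (Icc A C ∩ Ioi B) t :=
      (hy t htBC).mono (fun s hs => ⟨hs.2.le, hs.1.2⟩)
    have h2 : HasDerivWithinAt z (F (z t)) (Icc A C ∩ Ioi B) t := by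
      refine (h1.congr (fun s hs => hzy ⟨hs.2.le, hs.1.2⟩) (hzy htBC)).congr_deriv ?_
      rw [hzy htBC]
    exact (hasDerivWithinAt_inter (Ioi_mem_nhds h)).mp h2


lemma chain_VM {q M : ℝ} (hq : 0 < q) (hM : 0 ≤ M) (x₀ : ℝ × ℝ) (n : ℕ) :
    ∃ x : ℝ → ℝ × ℝ, x 0 = x₀ ∧
      ∀ t ∈ Icc 0 ((n : ℝ) * 4⁻¹), HasDerivWithinAt x (VM q M (x t)) (Icc 0 ((n:ℝ) * 4⁻¹)) t := by
  induction n with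
  | zero =>
    obtain ⟨x, hx0, hx⟩ := step_VM hq hM 0 x₀
    refine ⟨x, hx0, fun t ht => ?_⟩
    simp only [Nat.cast_zero, zero_mul] at ht ⊢
    have ht0 : t = 0 := le_antisymm ht.2 ht.1
    subst ht0
    exact (hx 0 ⟨le_refl 0, by norm_num⟩).mono (by
      intro s hs
      simp only [mem_Icc] at hs ⊢
      constructor
      · exact hs.1
      · linarith [hs.2, hs.1])
  | succ n ih =>
    obtain ⟨x, hx0, hx⟩ := ih
    obtain ⟨y, hy0, hy⟩ := step_VM hq hM ((n : ℝ) * 4⁻¹) (x ((n:ℝ) * 4⁻¹))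
    have hcast : (n : ℝ) * 4⁻¹ + 4⁻¹ = ((n+1 : ℕ) : ℝ) * 4⁻¹ := by push_cast; ring
    rw [hcast] at hy
    obtain ⟨z, hzx, hz⟩ := glue_sol (by positivity) (by rw [← hcast]; linarith) hx hy hy0.symm
    refine ⟨z, ?_, hz⟩
    rw [hzx ⟨le_refl 0, by positivity⟩, hx0]


noncomputable def Phi (q y : ℝ) : ℝ := psi q y * y / (q + 2)

noncomputable def PhiM (q M y : ℝ) : ℝ :=
  Phi q (clampF M y) + psiC q M y * (y - clampF M y)

lemma clampF_right {M y : ℝ} (hM : 0 ≤ M) (h : M ≤ y) : clampF M y = M := by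
  rw [clampF, min_eq_right h, max_eq_right (by linarith)]

lemma clampF_left {M y : ℝ} (hM : 0 ≤ M) (h : y ≤ -M) : clampF M y = -M := by
  rw [clampF, min_eq_left (by linarith), max_eq_left h]

lemma hasDerivAt_psi' {q : ℝ} (hq : 0 < q) (y : ℝ) :
    HasDerivAt (psi q) ((q + 1) * |y| ^ q) y := hasDerivAt_psi hq y

lemma hasDerivAt_Phi {q : ℝ} (hq : 0 < q) (y : ℝ) :
    HasDerivAt (Phi q) (psi q y) y := by
  have h := ((hasDerivAt_psi' hq y).mul (hasDerivAt_id y)).div_const (q + 2)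
  refine (h.congr_deriv ?_ : _)
  rw [psi, id_eq]
  field_simp
  ring

lemma Phi_nonneg {q : ℝ} (hq : 0 < q) (y : ℝ) : 0 ≤ Phi q y := by
  rw [Phi, psi]
  have h1 : 0 ≤ |y| ^ q := Real.rpow_nonneg (abs_nonneg y) q
  have h2 : (0:ℝ) ≤ y * y := mul_self_nonneg y
  have : 0 ≤ |y| ^ q * y * y := by nlinarith
  positivity

lemma PhiM_eq_mid {q M y : ℝ} (h : |y| ≤ M) : PhiM q M y = Phi q y := by
  rw [PhiM, clampF_eq h, psiC, clampF_eq h, sub_self, mul_zero, add_zero]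

lemma PhiM_eq_right {q M y : ℝ} (hM : 0 ≤ M) (h : M ≤ y) :
    PhiM q M y = Phi q M + psi q M * (y - M) := by
  rw [PhiM, clampF_right hM h, psiC, clampF_right hM h]

lemma PhiM_eq_left {q M y : ℝ} (hM : 0 ≤ M) (h : y ≤ -M) :
    PhiM q M y = Phi q (-M) + psi q (-M) * (y + M) := by
  rw [PhiM, clampF_left hM h, psiC, clampF_left hM h, sub_neg_eq_add]

lemma psiC_eq {q M y : ℝ} (h : |y| ≤ M) : psiC q M y = psi q y := by
  rw [psiC, clampF_eq h]

lemma hasDerivAt_PhiM {q M : ℝ} (hq : 0 < q) (hM : 0 < M) (y : ℝ) :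
    HasDerivAt (PhiM q M) (psiC q M y) y := by
  have affR : ∀ w : ℝ, HasDerivAt (fun z => Phi q M + psi q M * (z - M)) (psi q M) w := by
    intro w
    have := (((hasDerivAt_id w).sub_const M).const_mul (psi q M)).const_add (Phi q M)
    simpa using this
  have affL : ∀ w : ℝ, HasDerivAt (fun z => Phi q (-M) + psi q (-M) * (z + M)) (psi q (-M)) w := by
    intro w
    have := (((hasDerivAt_id w).add_const M).const_mul (psi q (-M))).const_add (Phi q (-M))
    simpa using this
  rcases lt_trichotomy (|y|) M with h | h | h
  · have hev : PhiM q M =ᶠ[𝓝 y] Phi q := by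
      have : {z : ℝ | |z| < M} ∈ 𝓝 y := (isOpen_Iio.preimage continuous_abs).mem_nhds h
      filter_upwards [this] with z hz
      exact PhiM_eq_mid hz.le
    refine ((hasDerivAt_Phi hq y).congr_of_eventuallyEq hev).congr_deriv ?_
    rw [psiC_eq h.le]
  · rcases (abs_eq hM.le).mp h with hy | hy
    · have e1 : psiC q M y = psi q y := psiC_eq h.le
      have hL : HasDerivWithinAt (PhiM q M) (psiC q M y) (Iic y) y := by
        rw [e1]
        refine ((hasDerivAt_Phi hq y).hasDerivWithinAt).congr_of_eventuallyEq ?_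
          (PhiM_eq_mid h.le)
        have hmem : Ioi (-M) ∈ 𝓝[Iic y] y := nhdsWithin_le_nhds (Ioi_mem_nhds (by
          rw [hy]; linarith))
        filter_upwards [hmem, self_mem_nhdsWithin] with z hz1 hz2
        exact PhiM_eq_mid (abs_le.mpr ⟨le_of_lt hz1, le_trans hz2 (le_of_eq hy)⟩)
      have hR : HasDerivWithinAt (PhiM q M) (psiC q M y) (Ici y) y := by
        rw [e1, hy]
        refine ((affR M).hasDerivWithinAt).congr (fun z hz => ?_) ?_
        · exact PhiM_eq_right hM.le hz
        · exact PhiM_eq_right hM.le (le_refl M)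
      have := hL.union hR
      rwa [Iic_union_Ici, hasDerivWithinAt_univ] at this
    · have e1 : psiC q M y = psi q y := psiC_eq h.le
      have hR : HasDerivWithinAt (PhiM q M) (psiC q M y) (Ici y) y := by
        rw [e1]
        refine ((hasDerivAt_Phi hq y).hasDerivWithinAt).congr_of_eventuallyEq ?_
          (PhiM_eq_mid h.le)
        have hmem : Iio M ∈ 𝓝[Ici y] y := nhdsWithin_le_nhds (Iio_mem_nhds (by
          rw [hy]; linarith))
        filter_upwards [hmem, self_mem_nhdsWithin] with z hz1 hz2
        exact PhiM_eq_mid (abs_le.mpr ⟨hy ▸ hz2, le_of_lt hz1⟩)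
      have hL : HasDerivWithinAt (PhiM q M) (psiC q M y) (Iic y) y := by
        rw [e1, hy]
        refine ((affL (-M)).hasDerivWithinAt).congr (fun z hz => ?_) ?_
        · exact PhiM_eq_left hM.le hz
        · exact PhiM_eq_left hM.le (le_refl (-M))
      have := hL.union hR
      rwa [Iic_union_Ici, hasDerivWithinAt_univ] at this
  · rcases lt_or_ge y 0 with hy | hy
    · have hyM : y < -M := by rw [abs_of_neg hy] at h; linarith
      have hev : (fun z => Phi q (-M) + psi q (-M) * (z + M)) =ᶠ[𝓝 y] PhiM q M := by
        filter_upwards [Iio_mem_nhds hyM] with z hz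
        rw [PhiM_eq_left hM.le hz.le]
      refine ((affL y).congr_of_eventuallyEq hev.symm).congr_deriv ?_
      rw [psiC, clampF_left hM.le hyM.le]
    · have hyM : M < y := by rw [abs_of_nonneg hy] at h; linarith
      have hev : (fun z => Phi q M + psi q M * (z - M)) =ᶠ[𝓝 y] PhiM q M := by
        filter_upwards [Ioi_mem_nhds hyM] with z hz
        rw [PhiM_eq_right hM.le hz.le]
      refine ((affR y).congr_of_eventuallyEq hev.symm).congr_deriv ?_
      rw [psiC, clampF_right hM.le hyM.le]

lemma psi_neg (q y : ℝ) : psi q (-y) = -psi q y := by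
  simp only [psi, abs_neg]; ring

lemma psi_nonneg {q M : ℝ} (hM : 0 ≤ M) : 0 ≤ psi q M :=
  mul_nonneg (Real.rpow_nonneg (abs_nonneg M) q) hM

lemma PhiM_zero {q M : ℝ} (hM : 0 ≤ M) : PhiM q M 0 = 0 := by
  have h0 : |(0:ℝ)| ≤ M := by simpa using hM
  rw [PhiM_eq_mid h0, Phi, psi_zero, zero_mul, zero_div]

lemma PhiM_nonneg {q M : ℝ} (hq : 0 < q) (hM : 0 ≤ M) (y : ℝ) : 0 ≤ PhiM q M y := by
  rcases le_or_gt (|y|) M with h | h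
  · rw [PhiM_eq_mid h]; exact Phi_nonneg hq y
  · rcases lt_or_ge y 0 with hy | hy
    · have hyM : y ≤ -M := by rw [abs_of_neg hy] at h; linarith
      rw [PhiM_eq_left hM hyM]
      have h1 : psi q (-M) ≤ 0 := by rw [psi_neg]; linarith [psi_nonneg (q := q) hM]
      have h2 : y + M ≤ 0 := by linarith
      have := mul_nonneg_iff.mpr (Or.inr ⟨h1, h2⟩)
      linarith [Phi_nonneg hq (-M)]
    · have hyM : M ≤ y := by rw [abs_of_nonneg hy] at h; linarith
      rw [PhiM_eq_right hM hyM]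
      have := mul_nonneg (psi_nonneg (q := q) hM) (by linarith : (0:ℝ) ≤ y - M)
      linarith [Phi_nonneg hq M]

lemma abs_psiC_mul_abs_le {q M : ℝ} (hq : 0 < q) (hM : 0 ≤ M) (y : ℝ) :
    |psiC q M y| * |y| ≤ (q + 2) * PhiM q M y := by
  have hq2 : (0:ℝ) < q + 2 := by linarith
  rcases le_or_gt (|y|) M with h | h
  · rw [psiC_eq h, PhiM_eq_mid h, abs_psi hq]
    have E2 : (q+2) * Phi q y = |y| ^ q * (y * y) := by
      rw [Phi, psi]; field_simp
    rcases eq_or_ne y 0 with rfl | hy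
    · simp [Phi, psi_zero, Real.zero_rpow (by positivity : q + 1 ≠ 0)]
    · rw [Real.rpow_add_one (abs_ne_zero.mpr hy), E2, mul_assoc, abs_mul_abs_self]
  · have hpsi : 0 ≤ psi q M := psi_nonneg hM
    rcases lt_or_ge y 0 with hy | hy
    · have hyM : y ≤ -M := by rw [abs_of_neg hy] at h; linarith
      have E1 : |psiC q M y| * |y| = psi q M * (-y) := by
        rw [psiC, clampF_left hM hyM, psi_neg, abs_neg,
          abs_of_nonneg hpsi, abs_of_neg hy]
      have E2 : (q+2) * PhiM q M y = psi q M * M - (q+2) * (psi q M * (y + M)) := by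
        rw [PhiM_eq_left hM hyM, Phi, psi_neg]; field_simp; ring
      rw [E1, E2]
      nlinarith [mul_nonneg hpsi (show (0:ℝ) ≤ -y - M by linarith), hq]
    · have hyM : M ≤ y := by rw [abs_of_nonneg hy] at h; linarith
      have E1 : |psiC q M y| * |y| = psi q M * y := by
        rw [psiC, clampF_right hM hyM, abs_of_nonneg hpsi, abs_of_nonneg hy]
      have E2 : (q+2) * PhiM q M y = psi q M * M + (q+2) * (psi q M * (y - M)) := by
        rw [PhiM_eq_right hM hyM, Phi]; field_simp
      rw [E1, E2]
      nlinarith [mul_nonneg hpsi (show (0:ℝ) ≤ y - M by linarith), hq]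

lemma PhiM_lower {q M : ℝ} (hq : 0 < q) (hM : 0 ≤ M) {y : ℝ} (h : M < |y|) :
    Phi q M ≤ PhiM q M y := by
  rcases lt_or_ge y 0 with hy | hy
  · have hyM : y ≤ -M := by rw [abs_of_neg hy] at h; linarith
    rw [PhiM_eq_left hM hyM]
    have h1 : Phi q (-M) = Phi q M := by rw [Phi, Phi, psi_neg]; ring_nf
    have h2 : 0 ≤ psi q (-M) * (y + M) := by
      apply mul_nonneg_iff.mpr
      refine Or.inr ⟨?_, by linarith⟩
      rw [psi_neg]; linarith [psi_nonneg (q := q) hM]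
    linarith
  · have hyM : M ≤ y := by rw [abs_of_nonneg hy] at h; linarith
    rw [PhiM_eq_right hM hyM]
    have := mul_nonneg (psi_nonneg (q := q) hM) (by linarith : (0:ℝ) ≤ y - M)
    linarith


lemma exists_sol_Icc {q : ℝ} (hq : 0 < q) (a T : ℝ) (hT : 0 ≤ T) :
    ∃ x : ℝ → ℝ × ℝ, x 0 = ((a : ℝ), 0) ∧
      ∀ t ∈ Icc 0 T, HasDerivWithinAt x (Vfield q (x t)) (Icc 0 T) t := by
  have hq2 : (0:ℝ) < q + 2 := by linarith
  set c : ℝ := (a^2/2) * Real.exp ((q+2)*T) with hc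
  have hc0 : 0 ≤ c := by positivity
  set M : ℝ := max 1 ((q+2)*c + 1) with hMdef
  have hM1 : (1:ℝ) ≤ M := le_max_left _ _
  have hM : (0:ℝ) < M := by linarith
  -- choose n
  obtain ⟨n, hn⟩ : ∃ n : ℕ, T ≤ (n:ℝ) * 4⁻¹ := by
    refine ⟨⌈4*T⌉₊, ?_⟩
    have := Nat.le_ceil (4*T)
    linarith
  obtain ⟨x, hx0, hx⟩ := chain_VM (q := q) (M := M) hq hM.le ((a : ℝ), 0) n
  have hd : ∀ t ∈ Icc 0 T, HasDerivWithinAt x (VM q M (x t)) (Icc 0 T) t := by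
    intro t ht
    exact (hx t ⟨ht.1, ht.2.trans hn⟩).mono (fun s hs => ⟨hs.1, hs.2.trans hn⟩)
  have hcont : ContinuousOn x (Icc 0 T) := fun t ht => (hd t ht).continuousWithinAt
  -- energy
  set En : ℝ → ℝ := fun t => (x t).1^2/2 + PhiM q M ((x t).2) with hEn
  have hPhiMcont : Continuous (PhiM q M) :=
    continuous_iff_continuousAt.mpr (fun y => (hasDerivAt_PhiM hq hM y).continuousAt)
  have hEncont : ContinuousOn En (Icc 0 T) := by
    apply ContinuousOn.add
    · exact (((hcont.fst)).pow 2).div_const 2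
    · exact hPhiMcont.comp_continuousOn hcont.snd
  have hEn0 : En 0 = a^2/2 := by
    rw [hEn]
    simp only [hx0]
    rw [PhiM_zero hM.le]
    norm_num
  have hEnnn : ∀ t ∈ Icc 0 T, 0 ≤ En t := by
    intro t ht
    have := PhiM_nonneg hq hM.le ((x t).2)
    have h2 : 0 ≤ (x t).1^2/2 := by positivity
    rw [hEn]; dsimp only; linarith
  -- derivative of energy
  have hEnd : ∀ t ∈ Ico 0 T, HasDerivWithinAt En
      (-(psiC q M ((x t).2)) * |(x t).2|) (Ici t) t := by
    intro t ht
    have hxt : HasDerivWithinAt x (VM q M (x t)) (Ici t) t := by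
      have h1 : HasDerivWithinAt x (VM q M (x t)) (Ici t ∩ Iio T) t := by
        refine (hd t ⟨ht.1, ht.2.le⟩).mono (fun s hs => ⟨ht.1.trans hs.1, hs.2.le⟩)
      exact (hasDerivWithinAt_inter (Iio_mem_nhds ht.2)).mp h1
    have hx1 : HasDerivWithinAt (fun s => (x s).1) ((VM q M (x t)).1) (Ici t) t :=
      (ContinuousLinearMap.fst ℝ ℝ ℝ).hasFDerivAt.comp_hasDerivWithinAt t hxt
    have hx2 : HasDerivWithinAt (fun s => (x s).2) ((VM q M (x t)).2) (Ici t) t :=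
      (ContinuousLinearMap.snd ℝ ℝ ℝ).hasFDerivAt.comp_hasDerivWithinAt t hxt
    have hE1 : HasDerivWithinAt (fun s => (x s).1^2/2)
        ((x t).1 * (VM q M (x t)).1) (Ici t) t := by
      have := (hx1.pow 2).div_const 2
      refine this.congr_deriv ?_
      ring
    have hE2 : HasDerivWithinAt (fun s => PhiM q M ((x s).2))
        (psiC q M ((x t).2) * (VM q M (x t)).2) (Ici t) t :=
      by have h := (hasDerivAt_PhiM hq hM ((x t).2)).comp_hasDerivWithinAt t hx2; exact h
    have := hE1.add hE2
    refine (this.congr_deriv ?_ : _)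
    simp only [VM]
    rcases le_or_gt 0 ((x t).2) with h | h
    · rw [abs_of_nonneg h]; ring
    · rw [abs_of_neg h]; ring
  -- Gronwall
  have hGr : ∀ t ∈ Icc 0 T, ‖En t‖ ≤ gronwallBound (a^2/2) (q+2) 0 (t - 0) := by
    apply norm_le_gronwallBound_of_norm_deriv_right_le hEncont hEnd
    · rw [hEn0, Real.norm_eq_abs, abs_of_nonneg (by positivity)]
    · intro t ht
      have hb := abs_psiC_mul_abs_le hq hM.le ((x t).2)
      have h1 : ‖-(psiC q M ((x t).2)) * |(x t).2|‖ = |psiC q M ((x t).2)| * |(x t).2| := by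
        rw [Real.norm_eq_abs, abs_mul, abs_neg, abs_abs]
      rw [h1]
      have h2 : (q+2) * PhiM q M ((x t).2) ≤ (q+2) * En t := by
        have h3 : 0 ≤ (x t).1^2/2 := by positivity
        have : PhiM q M ((x t).2) ≤ En t := by rw [hEn]; dsimp only; linarith
        exact mul_le_mul_of_nonneg_left this hq2.le
      have h4 : En t ≤ ‖En t‖ := le_abs_self _
      calc |psiC q M ((x t).2)| * |(x t).2| ≤ (q+2) * PhiM q M ((x t).2) := hb
        _ ≤ (q+2) * En t := h2
        _ ≤ (q+2) * ‖En t‖ := by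
            apply mul_le_mul_of_nonneg_left h4 hq2.le
        _ ≤ (q+2) * ‖En t‖ + 0 := by linarith
  have hEnle : ∀ t ∈ Icc 0 T, En t ≤ c := by
    intro t ht
    have := hGr t ht
    rw [sub_zero, gronwallBound_ε0] at this
    have h5 : (a^2/2) * Real.exp ((q+2)*t) ≤ c := by
      rw [hc]
      apply mul_le_mul_of_nonneg_left _ (by positivity)
      exact Real.exp_le_exp.mpr (by nlinarith [ht.2, hq2])
    calc En t ≤ ‖En t‖ := le_abs_self _
      _ ≤ _ := le_trans this h5
  -- bound on second component
  have hbd : ∀ t ∈ Icc 0 T, |(x t).2| ≤ M := by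
    intro t ht
    by_contra hcon
    push_neg at hcon
    have h1 : Phi q M ≤ PhiM q M ((x t).2) := PhiM_lower hq hM.le hcon
    have h2 : c < Phi q M := by
      rw [Phi, psi, abs_of_pos hM, lt_div_iff₀ hq2]
      have hMq : (1:ℝ) ≤ M ^ q := Real.one_le_rpow hM1 hq.le
      have hM2 : (q+2)*c + 1 ≤ M := le_max_right _ _
      have e1 : M*M ≤ M ^ q * (M*M) := le_mul_of_one_le_left (by positivity) hMq
      have e2 : M ≤ M*M := le_mul_of_one_le_left hM.le hM1
      nlinarith [e1, e2, hM2]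
    have h3 : PhiM q M ((x t).2) ≤ En t := by
      have h4 : 0 ≤ (x t).1^2/2 := by positivity
      rw [hEn]; dsimp only; linarith
    have := hEnle t ht
    linarith
  -- de-truncation
  refine ⟨x, hx0, fun t ht => ?_⟩
  have : VM q M (x t) = Vfield q (x t) := by
    rw [VM, Vfield, psiC_eq (hbd t ht)]
  rw [← this]
  exact hd t ht


lemma sol_unique {q : ℝ} (hq : 0 < q) {x y : ℝ → ℝ × ℝ} {b : ℝ}
    (hxc : ContinuousOn x (Icc 0 b)) (hyc : ContinuousOn y (Icc 0 b))
    (hx : ∀ t ∈ Ico 0 b, HasDerivWithinAt x (Vfield q (x t)) (Ici t) t)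
    (hy : ∀ t ∈ Ico 0 b, HasDerivWithinAt y (Vfield q (y t)) (Ici t) t)
    (h0 : x 0 = y 0) : EqOn x y (Icc 0 b) := by
  obtain ⟨Bx, hBx⟩ := isCompact_Icc.exists_bound_of_continuousOn hxc
  obtain ⟨By, hBy⟩ := isCompact_Icc.exists_bound_of_continuousOn hyc
  set B : ℝ := max (max Bx By) 0 with hB
  have hB0 : 0 ≤ B := le_max_right _ _
  obtain ⟨K, hK⟩ := lipschitzWith_VM (q := q) (M := B) hq hB0
  have hVeq : ∀ z : ℝ × ℝ, z ∈ Metric.closedBall (0 : ℝ × ℝ) B → VM q B z = Vfield q z := by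
    intro z hz
    have h1 : |z.2| ≤ B := by
      have := norm_snd_le z
      have h2 : ‖z‖ ≤ B := by simpa using mem_closedBall_zero_iff.mp hz
      simp only [Real.norm_eq_abs] at this
      linarith
    rw [VM, Vfield, psiC_eq h1]
  have hv : ∀ _t : ℝ, LipschitzOnWith K (Vfield q) (Metric.closedBall (0:ℝ×ℝ) B) := by
    intro t z hz w hw
    rw [← hVeq z hz, ← hVeq w hw]
    exact hK z w
  have hxs : ∀ t ∈ Ico 0 b, x t ∈ Metric.closedBall (0:ℝ×ℝ) B := by
    intro t ht
    rw [mem_closedBall_zero_iff]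
    exact le_trans (hBx t ⟨ht.1, ht.2.le⟩) (le_trans (le_max_left _ _) (le_max_left _ _))
  have hys : ∀ t ∈ Ico 0 b, y t ∈ Metric.closedBall (0:ℝ×ℝ) B := by
    intro t ht
    rw [mem_closedBall_zero_iff]
    exact le_trans (hBy t ⟨ht.1, ht.2.le⟩) (le_trans (le_max_right _ _) (le_max_left _ _))
  exact ODE_solution_unique_of_mem_Icc_right (v := fun _ => Vfield q)
    (s := fun _ => Metric.closedBall (0:ℝ×ℝ) B) (fun t _ => hv t) hxc hx hxs hyc hy hys h0


lemma deriv_Ici_of_Icc {z : ℝ → ℝ × ℝ} {w : ℝ × ℝ} {T t : ℝ} (ht : t ∈ Ico 0 T)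
    (h : HasDerivWithinAt z w (Icc 0 T) t) : HasDerivWithinAt z w (Ici t) t :=
  (hasDerivWithinAt_inter (Iio_mem_nhds ht.2)).mp
    (h.mono fun s hs => ⟨ht.1.trans hs.1, hs.2.le⟩)

lemma exists_sol_global {q : ℝ} (hq : 0 < q) (a : ℝ) :
    ∃ x : ℝ → ℝ × ℝ, x 0 = ((a : ℝ), 0) ∧
      ∀ t ∈ Ici (0:ℝ), HasDerivWithinAt x (Vfield q (x t)) (Ici 0) t := by
  have hsol : ∀ n : ℕ, ∃ x : ℝ → ℝ × ℝ, x 0 = ((a : ℝ), 0) ∧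
      ∀ t ∈ Icc 0 (n:ℝ), HasDerivWithinAt x (Vfield q (x t)) (Icc 0 (n:ℝ)) t :=
    fun n => exists_sol_Icc hq a n (Nat.cast_nonneg n)
  choose X hX0 hXd using hsol
  have hcont : ∀ n : ℕ, ContinuousOn (X n) (Icc 0 (n:ℝ)) :=
    fun n t ht => (hXd n t ht).continuousWithinAt
  have hIci : ∀ (n : ℕ) (t : ℝ), t ∈ Ico 0 (n:ℝ) →
      HasDerivWithinAt (X n) (Vfield q (X n t)) (Ici t) t :=
    fun n t ht => deriv_Ici_of_Icc ht (hXd n t ⟨ht.1, ht.2.le⟩)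
  have hconsist : ∀ m n : ℕ, EqOn (X m) (X n) (Icc 0 (min (m:ℝ) (n:ℝ))) := by
    intro m n
    apply sol_unique hq
    · exact (hcont m).mono (Icc_subset_Icc le_rfl (min_le_left _ _))
    · exact (hcont n).mono (Icc_subset_Icc le_rfl (min_le_right _ _))
    · exact fun t ht => hIci m t ⟨ht.1, lt_of_lt_of_le ht.2 (min_le_left _ _)⟩
    · exact fun t ht => hIci n t ⟨ht.1, lt_of_lt_of_le ht.2 (min_le_right _ _)⟩
    · rw [hX0 m, hX0 n]
  set x : ℝ → ℝ × ℝ := fun t => X (⌊t⌋₊ + 1) t with hx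
  have key : ∀ t : ℝ, 0 ≤ t → ∀ n : ℕ, t ≤ (n:ℝ) → x t = X n t := by
    intro t ht n hn
    have h1 : t ≤ ((⌊t⌋₊ + 1 : ℕ) : ℝ) := by
      push_cast
      exact (Nat.lt_floor_add_one t).le
    exact hconsist (⌊t⌋₊ + 1) n ⟨ht, le_min h1 hn⟩
  have hx0 : x 0 = ((a:ℝ), 0) := by
    rw [hx]
    simp only [Nat.floor_zero, zero_add]
    exact hX0 1
  refine ⟨x, hx0, fun t ht => ?_⟩
  set n : ℕ := ⌊t⌋₊ + 1 with hn
  have htn : t < (n:ℝ) := by push_cast [hn]; exact Nat.lt_floor_add_one t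
  have h1 : HasDerivWithinAt (X n) (Vfield q (X n t)) (Ici 0 ∩ Iio (n:ℝ)) t :=
    (hXd n t ⟨ht, htn.le⟩).mono (fun s hs => ⟨hs.1, hs.2.le⟩)
  have h2 : HasDerivWithinAt x (Vfield q (x t)) (Ici 0 ∩ Iio (n:ℝ)) t := by
    have heq : ∀ s ∈ Ici (0:ℝ) ∩ Iio (n:ℝ), x s = X n s :=
      fun s hs => key s hs.1 n hs.2.le
    have hxt : x t = X n t := key t ht n htn.le
    refine (h1.congr heq hxt).congr_deriv ?_
    rw [hxt]
  exact (hasDerivWithinAt_inter (Iio_mem_nhds htn)).mp h2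


lemma abs_raw {q : ℝ} (hq : 0 < q) (u : ℝ) : |(|u| ^ q * u)| = |u| ^ (q + 1) :=
  abs_psi hq u

section
variable {p : ℝ} (hp : p ∈ Set.Ioo (1:ℝ) 2)
include hp

lemma hq_pos : 0 < (2-p)/(p-1) := div_pos (by linarith [hp.2]) (by linarith [hp.1])

lemma identityA (u : ℝ) :
    -(|(-(|u| ^ ((2-p)/(p-1)) * u))| ^ (p-2) * (-(|u| ^ ((2-p)/(p-1)) * u))) = u := by
  have hp1 : p - 1 ≠ 0 := by have := hp.1; intro h; linarith
  set q : ℝ := (2-p)/(p-1) with hqdef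
  have hq : 0 < q := hq_pos hp
  rcases eq_or_ne u 0 with rfl | hu
  · simp
  · have hau : (0:ℝ) < |u| := abs_pos.mpr hu
    have h1 : |(-(|u| ^ q * u))| = |u| ^ (q+1) := by rw [abs_neg]; exact abs_raw hq u
    rw [h1, ← Real.rpow_mul (abs_nonneg u), mul_neg, neg_neg, ← mul_assoc,
      ← Real.rpow_add hau]
    have he : (q+1)*(p-2) + q = 0 := by rw [hqdef]; field_simp; ring
    rw [he, Real.rpow_zero, one_mul]

lemma identityB (u : ℝ) :
    |(-(|u| ^ ((2-p)/(p-1)) * u))| ^ (p-1) = |u| := by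
  have hp1 : p - 1 ≠ 0 := by have := hp.1; intro h; linarith
  set q : ℝ := (2-p)/(p-1) with hqdef
  have hq : 0 < q := hq_pos hp
  rcases eq_or_ne u 0 with rfl | hu
  · simp [Real.zero_rpow hp1]
  · have hau : (0:ℝ) < |u| := abs_pos.mpr hu
    rw [abs_neg, abs_raw hq, ← Real.rpow_mul (abs_nonneg u)]
    have he : (q+1)*(p-1) = 1 := by rw [hqdef]; field_simp; ring
    rw [he, Real.rpow_one]

lemma identityC (v : ℝ) :
    -(|(-(|v| ^ (p-2) * v))| ^ ((2-p)/(p-1)) * (-(|v| ^ (p-2) * v))) = v := by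
  have hp1 : p - 1 ≠ 0 := by have := hp.1; intro h; linarith
  set q : ℝ := (2-p)/(p-1) with hqdef
  have hq : 0 < q := hq_pos hp
  rcases eq_or_ne v 0 with rfl | hv
  · simp
  · have hav : (0:ℝ) < |v| := abs_pos.mpr hv
    have h1 : |(-(|v| ^ (p-2) * v))| = |v| ^ (p-1) := by
      rw [abs_neg, abs_mul, abs_of_nonneg (Real.rpow_nonneg (abs_nonneg v) _),
        ← Real.rpow_add_one (abs_ne_zero.mpr hv)]
      ring_nf
    rw [h1, ← Real.rpow_mul (abs_nonneg v), mul_neg, neg_neg, ← mul_assoc,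
      ← Real.rpow_add hav]
    have he : (p-1)*q + (p-2) = 0 := by rw [hqdef]; field_simp; ring
    rw [he, Real.rpow_zero, one_mul]

lemma identityD (v : ℝ) :
    |(-(|v| ^ (p-2) * v))| = |v| ^ (p-1) := by
  have hp1 : p - 1 ≠ 0 := by have := hp.1; intro h; linarith
  rcases eq_or_ne v 0 with rfl | hv
  · simp [Real.zero_rpow hp1]
  · rw [abs_neg, abs_mul, abs_of_nonneg (Real.rpow_nonneg (abs_nonneg v) _),
      ← Real.rpow_add_one (abs_ne_zero.mpr hv)]
    ring_nf

end

lemma continuous_psi {q : ℝ} (hq : 0 < q) : Continuous (psi q) :=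
  continuous_iff_continuousAt.mpr fun y => (hasDerivAt_psi hq y).continuousAt

lemma continuous_abs_rpow {c : ℝ} (hc : 0 ≤ c) : Continuous (fun z : ℝ => |z| ^ c) :=
  continuous_iff_continuousAt.mpr fun y =>
    (Real.continuousAt_rpow_const _ _ (Or.inr hc)).comp continuous_abs.continuousAt

lemma contDiffOn_one_of_deriv {f fd : ℝ → ℝ}
    (h : ∀ r ∈ Ici (0:ℝ), HasDerivWithinAt f (fd r) (Ici 0) r)
    (hc : ContinuousOn fd (Ici 0)) : ContDiffOn ℝ 1 f (Ici 0) := by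
  have hu : UniqueDiffOn ℝ (Ici (0:ℝ)) := uniqueDiffOn_Ici 0
  have hdiff : DifferentiableOn ℝ f (Ici 0) := fun r hr => (h r hr).differentiableWithinAt
  have heq : ∀ r ∈ Ici (0:ℝ), derivWithin f (Ici 0) r = fd r :=
    fun r hr => (h r hr).derivWithin (hu r hr)
  have hcont : ContDiffOn ℝ 0 (derivWithin f (Ici 0)) (Ici 0) := by
    rw [contDiffOn_zero]
    exact hc.congr heq
  have := (contDiffOn_succ_iff_derivWithin (n := 0) hu).mpr
    ⟨hdiff, by simp, hcont⟩
  simpa using this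


lemma sysSol_curve {p a : ℝ} {f g : ℝ → ℝ} (S : SysSol p a f g) :
    ∀ t ∈ Ici (0:ℝ), HasDerivWithinAt (fun t => (f t, g t))
      (Vfield ((2-p)/(p-1)) (f t, g t)) (Ici 0) t := by
  intro t ht
  exact (S.2.2.1 t ht).prodMk (S.2.2.2.1 t ht)

lemma sysSol_curve_unique {p a : ℝ} (hp : p ∈ Set.Ioo (1:ℝ) 2) {f₁ g₁ f₂ g₂ : ℝ → ℝ}
    (S₁ : SysSol p a f₁ g₁) (S₂ : SysSol p a f₂ g₂) :
    EqOn (fun t => (f₁ t, g₁ t)) (fun t => (f₂ t, g₂ t)) (Ici 0) := by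
  intro t ht
  have hc₁ : ContinuousOn (fun t => (f₁ t, g₁ t)) (Icc 0 t) :=
    ((S₁.1.continuousOn.mono (Icc_subset_Ici_self)).prodMk
      (S₁.2.1.continuousOn.mono (Icc_subset_Ici_self)))
  have hc₂ : ContinuousOn (fun t => (f₂ t, g₂ t)) (Icc 0 t) :=
    ((S₂.1.continuousOn.mono (Icc_subset_Ici_self)).prodMk
      (S₂.2.1.continuousOn.mono (Icc_subset_Ici_self)))
  have hd₁ : ∀ s ∈ Ico (0:ℝ) t, HasDerivWithinAt (fun t => (f₁ t, g₁ t))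
      (Vfield ((2-p)/(p-1)) (f₁ s, g₁ s)) (Ici s) s :=
    fun s hs => (sysSol_curve S₁ s hs.1).mono (Ici_subset_Ici.mpr hs.1)
  have hd₂ : ∀ s ∈ Ico (0:ℝ) t, HasDerivWithinAt (fun t => (f₂ t, g₂ t))
      (Vfield ((2-p)/(p-1)) (f₂ s, g₂ s)) (Ici s) s :=
    fun s hs => (sysSol_curve S₂ s hs.1).mono (Ici_subset_Ici.mpr hs.1)
  have h0 : (f₁ 0, g₁ 0) = (f₂ 0, g₂ 0) := by
    rw [S₁.2.2.2.2.1, S₁.2.2.2.2.2, S₂.2.2.2.2.1, S₂.2.2.2.2.2]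
  exact sol_unique (hq_pos hp) hc₁ hc₂ hd₁ hd₂ h0 ⟨ht, le_refl t⟩

lemma sysSol_exists {p : ℝ} (a : ℝ) (hp : p ∈ Set.Ioo (1:ℝ) 2) :
    ∃ f g : ℝ → ℝ, SysSol p a f g := by
  have hq : 0 < (2-p)/(p-1) := hq_pos hp
  obtain ⟨x, hx0, hx⟩ := exists_sol_global hq a
  set f : ℝ → ℝ := fun t => (x t).1 with hf
  set g : ℝ → ℝ := fun t => (x t).2 with hg
  have hf' : ∀ r ∈ Ici (0:ℝ), HasDerivWithinAt f (-(|g r| ^ ((2-p)/(p-1)) * g r)) (Ici 0) r :=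
    fun r hr => (ContinuousLinearMap.fst ℝ ℝ ℝ).hasFDerivAt.comp_hasDerivWithinAt r (hx r hr)
  have hg' : ∀ r ∈ Ici (0:ℝ), HasDerivWithinAt g (-|g r| + f r) (Ici 0) r :=
    fun r hr => (ContinuousLinearMap.snd ℝ ℝ ℝ).hasFDerivAt.comp_hasDerivWithinAt r (hx r hr)
  have hgc : ContinuousOn g (Ici 0) := fun r hr => (hg' r hr).continuousWithinAt
  have hfc : ContinuousOn f (Ici 0) := fun r hr => (hf' r hr).continuousWithinAt
  refine ⟨f, g, ?_, ?_, hf', hg', ?_, ?_⟩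
  · refine contDiffOn_one_of_deriv hf' ?_
    have : ContinuousOn (fun r => psi ((2-p)/(p-1)) (g r)) (Ici 0) :=
      (continuous_psi hq).comp_continuousOn hgc
    exact this.neg
  · refine contDiffOn_one_of_deriv hg' ?_
    exact (hgc.abs.neg).add hfc
  · rw [hf]; simp only [hx0]
  · rw [hg]; simp only [hx0]

end Aux

/-- Well-posedness: there is a unique pair `(f,g)` of `C¹` functions on
`[0,∞)` solving the system `f' = -|g|^{(2-p)/(p-1)} g`, `g' = -|g| + f` with `f(0)=a`,
`g(0)=0` (the solution being global); moreover `g = -|f'|^{p-2} f'`, so that `f` is the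
unique solution of `(|f'|^{p-2} f')' + f - |f'|^{p-1} = 0` with `f(0)=a`, `f'(0)=0`. -/
theorem stmt0 (p a : ℝ) (hp : p ∈ Set.Ioo (1:ℝ) 2) (ha : 0 < a) :
    (∃ f g : ℝ → ℝ, SysSol p a f g) ∧
    (∀ f₁ g₁ f₂ g₂ : ℝ → ℝ, SysSol p a f₁ g₁ → SysSol p a f₂ g₂ →
      Set.EqOn f₁ f₂ (Set.Ici 0) ∧ Set.EqOn g₁ g₂ (Set.Ici 0)) ∧
    (∀ f g : ℝ → ℝ, SysSol p a f g →
      (∀ r ∈ Set.Ici (0:ℝ),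
        g r = -(|(-(|g r| ^ ((2-p)/(p-1)) * g r))| ^ (p-2) * (-(|g r| ^ ((2-p)/(p-1)) * g r)))) ∧
      IsSol p a f (fun r => -(|g r| ^ ((2-p)/(p-1)) * g r)) (fun r => |g r| - f r)) ∧
    (∀ f g h hd kd : ℝ → ℝ, SysSol p a f g → IsSol p a h hd kd →
      Set.EqOn h f (Set.Ici 0)) := by
  have hp1 : (0:ℝ) < p - 1 := by linarith [hp.1]
  have hq : 0 < (2-p)/(p-1) := hq_pos hp
  -- part 3 as a lemma-like `have`, used in the tuple
  have part3 : ∀ f g : ℝ → ℝ, SysSol p a f g →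
      (∀ r ∈ Set.Ici (0:ℝ),
        g r = -(|(-(|g r| ^ ((2-p)/(p-1)) * g r))| ^ (p-2) * (-(|g r| ^ ((2-p)/(p-1)) * g r)))) ∧
      IsSol p a f (fun r => -(|g r| ^ ((2-p)/(p-1)) * g r)) (fun r => |g r| - f r) := by
    intro f g S
    refine ⟨fun r _ => (identityA hp (g r)).symm, ?_, ?_, ?_, ?_, ?_, S.2.2.2.2.1, ?_⟩
    · exact S.2.2.1
    · exact ((continuous_psi hq).comp_continuousOn S.2.1.continuousOn).neg
    · intro r hr
      have hfun : (fun s => |(-(|g s| ^ ((2-p)/(p-1)) * g s))| ^ (p-2) *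
          (-(|g s| ^ ((2-p)/(p-1)) * g s))) = fun s => -(g s) := by
        funext s
        have := identityA hp (g s)
        linarith
      rw [hfun]
      exact ((S.2.2.2.1 r hr).neg).congr_deriv (by ring)
    · exact (S.2.1.continuousOn.abs).sub S.1.continuousOn
    · intro r _
      rw [identityB hp (g r)]
      ring
    · show -(|g 0| ^ ((2-p)/(p-1)) * g 0) = 0
      rw [S.2.2.2.2.2]
      simp
  refine ⟨?_, ?_, part3, ?_⟩
  · exact sysSol_exists a hp
  · intro f₁ g₁ f₂ g₂ S₁ S₂
    have H := sysSol_curve_unique hp S₁ S₂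
    exact ⟨fun t ht => congrArg Prod.fst (H ht), fun t ht => congrArg Prod.snd (H ht)⟩
  · intro f g h hd kd S IS
    set G : ℝ → ℝ := fun r => -(|hd r| ^ (p-2) * hd r) with hGdef
    have hG' : ∀ r ∈ Set.Ici (0:ℝ), HasDerivWithinAt G (-(kd r)) (Set.Ici 0) r :=
      fun r hr => (IS.2.2.1 r hr).neg
    have hhc : ContinuousOn h (Set.Ici 0) := fun r hr => (IS.1 r hr).continuousWithinAt
    have hONE : ∀ r ∈ Set.Ioi (0:ℝ), kd r = |hd r| ^ (p-1) - h r := by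
      intro r hr
      have := IS.2.2.2.2.1 r hr
      linarith
    have h00 : kd 0 = |hd 0| ^ (p-1) - h 0 := by
      have l1 : Filter.Tendsto kd (𝓝[>] (0:ℝ)) (𝓝 (kd 0)) :=
        ((IS.2.2.2.1 0 Set.self_mem_Ici).mono_left (nhdsWithin_mono 0 Set.Ioi_subset_Ici_self))
      have hFc : ContinuousOn (fun r => |hd r| ^ (p-1) - h r) (Set.Ici 0) :=
        ((continuous_abs_rpow (by linarith : (0:ℝ) ≤ p - 1)).comp_continuousOn IS.2.1).sub hhc
      have l2 : Filter.Tendsto (fun r => |hd r| ^ (p-1) - h r) (𝓝[>] (0:ℝ))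
          (𝓝 (|hd 0| ^ (p-1) - h 0)) :=
        ((hFc 0 Set.self_mem_Ici).mono_left (nhdsWithin_mono 0 Set.Ioi_subset_Ici_self))
      have l3 : Filter.Tendsto kd (𝓝[>] (0:ℝ)) (𝓝 (|hd 0| ^ (p-1) - h 0)) := by
        refine l2.congr' ?_
        filter_upwards [self_mem_nhdsWithin] with r hr
        exact (hONE r hr).symm
      exact tendsto_nhds_unique l1 l3
    have keyG : ∀ r ∈ Set.Ici (0:ℝ), kd r = |G r| - h r := by
      intro r hr
      have hid : |G r| = |hd r| ^ (p-1) := identityD hp (hd r)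
      rcases eq_or_lt_of_le (Set.mem_Ici.mp hr) with h0 | hpos
      · rw [← h0] at hid ⊢
        rw [h00, hid]
      · rw [hid]
        exact hONE r hpos
    have SG : SysSol p a h G := by
      refine ⟨?_, ?_, ?_, ?_, IS.2.2.2.2.2.1, ?_⟩
      · exact contDiffOn_one_of_deriv IS.1 IS.2.1
      · exact contDiffOn_one_of_deriv hG' IS.2.2.2.1.neg
      · exact fun r hr => (IS.1 r hr).congr_deriv (identityC hp (hd r)).symm
      · intro r hr
        refine (hG' r hr).congr_deriv ?_
        rw [keyG r hr]
        ring
      · rw [hGdef]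
        simp only [IS.2.2.2.2.2.2]
        simp
    have H := sysSol_curve_unique hp SG S
    exact fun t ht => congrArg Prod.fst (H ht)
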